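/- Let ρ be a separable density matrix on ℂ^m ⊗ ℂ^n, and let A₁, A₂ be Hermitian m×m matrices and B₁, B₂ Hermitian n×n matrices with A_i² ≤ I and B_j² ≤ I (in the Loewner order). Then the CHSH expectation value satisfies |Tr(ρ C)| ≤ 2, where C = A₁⊗B₁ + A₁⊗B₂ + A₂⊗B₁ − A₂⊗B₂. That is, separable states satisfy the CHSH inequality. -/

import Mathlib

open Matrix Kronecker
open scoped ComplexOrder

noncomputable section

/-- A density matrix: positive semidefinite with unit trace. -/
def IsDensityMatrix {d : Type*} [Fintype d] [DecidableEq d] (ρ : Matrix d d ℂ) : Prop :=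
  ρ.PosSemidef ∧ ρ.trace = 1

/-- A density matrix on `ℂ^m ⊗ ℂ^n` is separable if it is a finite convex combination
of Kronecker products of density matrices on the factors. -/
def IsSepState {m n : ℕ} (ρ : Matrix (Fin m × Fin n) (Fin m × Fin n) ℂ) : Prop :=
  ∃ (k : ℕ) (p : Fin k → ℝ) (σ : Fin k → Matrix (Fin m) (Fin m) ℂ)
    (τ : Fin k → Matrix (Fin n) (Fin n) ℂ),
    (∀ i, 0 ≤ p i) ∧ (∑ i, p i = 1) ∧
    (∀ i, IsDensityMatrix (σ i)) ∧ (∀ i, IsDensityMatrix (τ i)) ∧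
    ρ = ∑ i, ((p i : ℂ)) • ((σ i) ⊗ₖ (τ i))


lemma trace_psd_nonneg {d : Type*} [Fintype d] [DecidableEq d] {P : Matrix d d ℂ}
    (h : P.PosSemidef) : 0 ≤ P.trace := by
  rw [Matrix.trace]
  apply Finset.sum_nonneg
  intro i _
  have := h.dotProduct_mulVec_nonneg (Pi.single i 1)
  simpa [dotProduct, Matrix.mulVec, Pi.single_apply, Matrix.diag] using this

lemma trace_mul_psd_nonneg {d : Type*} [Fintype d] [DecidableEq d] {P Q : Matrix d d ℂ}
    (hP : P.PosSemidef) (hQ : Q.PosSemidef) : 0 ≤ (P * Q).trace := by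
  obtain ⟨B, rfl⟩ : ∃ B : Matrix d d ℂ, Q = Bᴴ * B := by
    open scoped MatrixOrder in
    obtain ⟨B, hB⟩ := CStarAlgebra.nonneg_iff_eq_star_mul_self.mp hQ.nonneg
    exact ⟨B, hB⟩
  have : (P * (Bᴴ * B)).trace = (B * P * Bᴴ).trace := by
    rw [← Matrix.mul_assoc, Matrix.trace_mul_cycle]
  rw [this]
  exact trace_psd_nonneg (hP.mul_mul_conjTranspose_same B)

lemma key_bound {d : Type*} [Fintype d] [DecidableEq d] {σ A : Matrix d d ℂ}
    (hσ : σ.PosSemidef) (hσt : σ.trace = 1) (hA : A.IsHermitian)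
    (hA2 : (1 - A * A).PosSemidef) :
    (σ * A).trace.im = 0 ∧ |(σ * A).trace.re| ≤ 1 := by
  set t := (σ * A).trace with ht
  have h1m : ((1 : Matrix d d ℂ) - A).IsHermitian := Matrix.isHermitian_one.sub hA
  have h1p : ((1 : Matrix d d ℂ) + A).IsHermitian := Matrix.isHermitian_one.add hA
  have psdm : ((1 - A) * (1 - A)).PosSemidef := by
    have := Matrix.posSemidef_conjTranspose_mul_self ((1 : Matrix d d ℂ) - A)
    rwa [h1m.eq] at this
  have psdp : ((1 + A) * (1 + A)).PosSemidef := by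
    have := Matrix.posSemidef_conjTranspose_mul_self ((1 : Matrix d d ℂ) + A)
    rwa [h1p.eq] at this
  have em : (1 - A) * (1 - A) + (1 - A * A) = ((1 : Matrix d d ℂ) - A) + (1 - A) := by
    noncomm_ring
  have ep : (1 + A) * (1 + A) + (1 - A * A) = ((1 : Matrix d d ℂ) + A) + (1 + A) := by
    noncomm_ring
  have hm : 0 ≤ (σ * (((1 : Matrix d d ℂ) - A) + (1 - A))).trace := by
    rw [← em, Matrix.mul_add, Matrix.trace_add]
    exact add_nonneg (trace_mul_psd_nonneg hσ psdm) (trace_mul_psd_nonneg hσ hA2)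
  have hp : 0 ≤ (σ * (((1 : Matrix d d ℂ) + A) + (1 + A))).trace := by
    rw [← ep, Matrix.mul_add, Matrix.trace_add]
    exact add_nonneg (trace_mul_psd_nonneg hσ psdp) (trace_mul_psd_nonneg hσ hA2)
  have em' : (σ * (((1 : Matrix d d ℂ) - A) + (1 - A))).trace = 2 - 2 * t := by
    simp [Matrix.mul_add, Matrix.mul_sub, Matrix.trace_add, Matrix.trace_sub, hσt, ← ht]
    ring
  have ep' : (σ * (((1 : Matrix d d ℂ) + A) + (1 + A))).trace = 2 + 2 * t := by
    simp [Matrix.mul_add, Matrix.trace_add, hσt, ← ht]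
    ring
  rw [em'] at hm
  rw [ep'] at hp
  rw [Complex.nonneg_iff] at hm hp
  obtain ⟨hm1, hm2⟩ := hm
  obtain ⟨hp1, hp2⟩ := hp
  simp [Complex.sub_re, Complex.add_re, Complex.mul_re, Complex.sub_im, Complex.add_im,
    Complex.mul_im] at hm1 hm2 hp1 hp2
  constructor
  · linarith
  · rw [abs_le]; constructor <;> linarith

lemma chsh_real {a1 a2 b1 b2 : ℝ} (ha1 : |a1| ≤ 1) (ha2 : |a2| ≤ 1)
    (hb1 : |b1| ≤ 1) (hb2 : |b2| ≤ 1) :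
    |a1 * b1 + a1 * b2 + a2 * b1 - a2 * b2| ≤ 2 := by
  rw [abs_le] at *
  constructor <;> nlinarith [mul_nonneg (sub_nonneg.2 ha1.2) (sub_nonneg.2 hb1.2),
    mul_nonneg (sub_nonneg.2 ha1.2) (sub_nonneg.2 hb2.2),
    mul_nonneg (sub_nonneg.2 ha2.2) (sub_nonneg.2 hb1.2),
    mul_nonneg (sub_nonneg.2 ha2.2) (sub_nonneg.2 hb2.2),
    mul_nonneg (by linarith [ha1.1] : (0:ℝ) ≤ 1 + a1) (by linarith [hb1.1] : (0:ℝ) ≤ 1 + b1),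
    mul_nonneg (by linarith [ha1.1] : (0:ℝ) ≤ 1 + a1) (by linarith [hb2.1] : (0:ℝ) ≤ 1 + b2),
    mul_nonneg (by linarith [ha2.1] : (0:ℝ) ≤ 1 + a2) (by linarith [hb1.1] : (0:ℝ) ≤ 1 + b1),
    mul_nonneg (by linarith [ha2.1] : (0:ℝ) ≤ 1 + a2) (by linarith [hb2.1] : (0:ℝ) ≤ 1 + b2),
    mul_nonneg (sub_nonneg.2 ha1.2) (by linarith [hb1.1] : (0:ℝ) ≤ 1 + b1),
    mul_nonneg (sub_nonneg.2 ha1.2) (by linarith [hb2.1] : (0:ℝ) ≤ 1 + b2),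
    mul_nonneg (sub_nonneg.2 ha2.2) (by linarith [hb1.1] : (0:ℝ) ≤ 1 + b1),
    mul_nonneg (sub_nonneg.2 ha2.2) (by linarith [hb2.1] : (0:ℝ) ≤ 1 + b2),
    mul_nonneg (by linarith [ha1.1] : (0:ℝ) ≤ 1 + a1) (sub_nonneg.2 hb1.2),
    mul_nonneg (by linarith [ha1.1] : (0:ℝ) ≤ 1 + a1) (sub_nonneg.2 hb2.2),
    mul_nonneg (by linarith [ha2.1] : (0:ℝ) ≤ 1 + a2) (sub_nonneg.2 hb1.2),
    mul_nonneg (by linarith [ha2.1] : (0:ℝ) ≤ 1 + a2) (sub_nonneg.2 hb2.2)]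

/-- Separable states satisfy the CHSH inequality: for Hermitian observables with
`A_i² ≤ I`, `B_j² ≤ I` in the Loewner order, `|Tr(ρ C)| ≤ 2` where
`C = A₁⊗B₁ + A₁⊗B₂ + A₂⊗B₁ − A₂⊗B₂`. -/
theorem separable_satisfies_CHSH {m n : ℕ}
    (ρ : Matrix (Fin m × Fin n) (Fin m × Fin n) ℂ)
    (hρd : IsDensityMatrix ρ) (hρsep : IsSepState ρ)
    (A₁ A₂ : Matrix (Fin m) (Fin m) ℂ) (B₁ B₂ : Matrix (Fin n) (Fin n) ℂ)
    (hA₁ : A₁.IsHermitian) (hA₂ : A₂.IsHermitian)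
    (hB₁ : B₁.IsHermitian) (hB₂ : B₂.IsHermitian)
    (hA₁le : (1 - A₁ * A₁).PosSemidef) (hA₂le : (1 - A₂ * A₂).PosSemidef)
    (hB₁le : (1 - B₁ * B₁).PosSemidef) (hB₂le : (1 - B₂ * B₂).PosSemidef) :
    ‖(ρ * (A₁ ⊗ₖ B₁ + A₁ ⊗ₖ B₂ + A₂ ⊗ₖ B₁ - A₂ ⊗ₖ B₂)).trace‖ ≤ 2 := by
  obtain ⟨k, p, σ, τ, hp, hps, hσ, hτ, hρ⟩ := hρsep
  set a1 : Fin k → ℝ := fun i => ((σ i * A₁).trace).re with ha1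
  set a2 : Fin k → ℝ := fun i => ((σ i * A₂).trace).re with ha2
  set b1 : Fin k → ℝ := fun i => ((τ i * B₁).trace).re with hb1
  set b2 : Fin k → ℝ := fun i => ((τ i * B₂).trace).re with hb2
  have k1 : ∀ i, (σ i * A₁).trace = (a1 i : ℂ) ∧ |a1 i| ≤ 1 := fun i => by
    have h := key_bound (hσ i).1 (hσ i).2 hA₁ hA₁le
    exact ⟨by apply Complex.ext <;> simp [ha1, h.1], h.2⟩
  have k2 : ∀ i, (σ i * A₂).trace = (a2 i : ℂ) ∧ |a2 i| ≤ 1 := fun i => by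
    have h := key_bound (hσ i).1 (hσ i).2 hA₂ hA₂le
    exact ⟨by apply Complex.ext <;> simp [ha2, h.1], h.2⟩
  have k3 : ∀ i, (τ i * B₁).trace = (b1 i : ℂ) ∧ |b1 i| ≤ 1 := fun i => by
    have h := key_bound (hτ i).1 (hτ i).2 hB₁ hB₁le
    exact ⟨by apply Complex.ext <;> simp [hb1, h.1], h.2⟩
  have k4 : ∀ i, (τ i * B₂).trace = (b2 i : ℂ) ∧ |b2 i| ≤ 1 := fun i => by
    have h := key_bound (hτ i).1 (hτ i).2 hB₂ hB₂le
    exact ⟨by apply Complex.ext <;> simp [hb2, h.1], h.2⟩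
  have hT : ((ρ * (A₁ ⊗ₖ B₁ + A₁ ⊗ₖ B₂ + A₂ ⊗ₖ B₁ - A₂ ⊗ₖ B₂)).trace)
      = ((∑ i, p i * (a1 i * b1 i + a1 i * b2 i + a2 i * b1 i - a2 i * b2 i) : ℝ) : ℂ) := by
    rw [hρ, Matrix.sum_mul, Matrix.trace_sum]
    push_cast
    refine Finset.sum_congr rfl fun i _ => ?_
    rw [Matrix.smul_mul, Matrix.trace_smul]
    rw [Matrix.mul_sub, Matrix.mul_add, Matrix.mul_add,
      ← Matrix.mul_kronecker_mul, ← Matrix.mul_kronecker_mul,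
      ← Matrix.mul_kronecker_mul, ← Matrix.mul_kronecker_mul,
      Matrix.trace_sub, Matrix.trace_add, Matrix.trace_add,
      Matrix.trace_kronecker, Matrix.trace_kronecker, Matrix.trace_kronecker,
      Matrix.trace_kronecker, (k1 i).1, (k2 i).1, (k3 i).1, (k4 i).1]
    simp [smul_eq_mul]
  rw [hT, Complex.norm_real, Real.norm_eq_abs]
  calc |∑ i, p i * (a1 i * b1 i + a1 i * b2 i + a2 i * b1 i - a2 i * b2 i)|
      ≤ ∑ i, |p i * (a1 i * b1 i + a1 i * b2 i + a2 i * b1 i - a2 i * b2 i)| :=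
        Finset.abs_sum_le_sum_abs _ _
    _ ≤ ∑ i, p i * 2 := by
        refine Finset.sum_le_sum fun i _ => ?_
        rw [abs_mul, abs_of_nonneg (hp i)]
        exact mul_le_mul_of_nonneg_left
          (chsh_real (k1 i).2 (k2 i).2 (k3 i).2 (k4 i).2) (hp i)
    _ = 2 := by rw [← Finset.sum_mul, hps, one_mul]
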